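/- arXiv:2310.20500 — 6 statements merged into one kernel-verified Lean document; each statement's English description precedes it below -/
import Mathlib

section
/- Let k, n be natural numbers. Suppose that S and U are symmetric subsets of a group G, each containing the identity, and that X is a subset of G of size at most k such that S^n ⊆ X·U and x ∉ y·U^4 for all distinct x, y ∈ X. Then there exists X' ⊆ S^(k-1) with |X'| ≤ |X| such that S^n ⊆ X'·U^2. -/
open Pointwise

theorem stmt_1 {G : Type*} [Group G] (k n : ℕ) (S U : Set G)
    (hSsym : S⁻¹ = S) (hS1 : (1 : G) ∈ S)
    (hUsym : U⁻¹ = U) (hU1 : (1 : G) ∈ U)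
    (X : Finset G) (hXk : X.card ≤ k)
    (hcov : S ^ n ⊆ (X : Set G) * U)
    (hsep : ∀ x ∈ X, ∀ y ∈ X, x ≠ y → x ∉ y • U ^ 4) :
    ∃ X' : Finset G, (X' : Set G) ⊆ S ^ (k - 1) ∧ X'.card ≤ X.card ∧
      S ^ n ⊆ (X' : Set G) * U ^ 2 := by
  classical
  have hUinv : ∀ u ∈ U, u⁻¹ ∈ U := fun u hu => by
    rw [← hUsym]; exact Set.inv_mem_inv.2 hu
  -- trivial case: X empty
  by_cases hX0 : X = ∅
  · subst hX0
    refine ⟨∅, by simp, le_rfl, ?_⟩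
    intro s hs
    exact absurd (hcov hs) (by simp)
  have hXne : X.Nonempty := Finset.nonempty_iff_ne_empty.2 hX0
  have hk1 : 1 ≤ k := le_trans (Finset.card_pos.2 hXne) hXk
  -- the chain of subsets
  set W : ℕ → Finset G := fun m => X.filter (fun x => x ∈ S ^ m * U) with hW
  have hWX : ∀ m, W m ⊆ X := fun m => Finset.filter_subset _ _
  have hWmem : ∀ m x, x ∈ W m ↔ x ∈ X ∧ x ∈ S ^ m * U := by
    intro m x; simp [hW]
  have hWmono : ∀ m, W m ⊆ W (m + 1) := by
    intro m x hx
    rw [hWmem] at hx ⊢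
    exact ⟨hx.1, Set.mul_subset_mul_right (Set.pow_subset_pow_right hS1 (Nat.le_succ m)) hx.2⟩
  -- S^n is always covered by W n * U
  have htriv : S ^ n ⊆ (W n : Set G) * U := by
    intro s hs
    obtain ⟨x, hx, u, hu, hxu0⟩ := hcov hs
    have hxu : x * u = s := hxu0
    rw [← hxu]
    refine Set.mul_mem_mul ?_ hu
    rw [Finset.mem_coe, hWmem]
    refine ⟨hx, ?_⟩
    have : s * u⁻¹ ∈ S ^ n * U := Set.mul_mem_mul hs (hUinv u hu)
    rwa [← hxu, mul_assoc, mul_inv_cancel, mul_one] at this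
  -- 1 ∈ W m * U, so W m is nonempty
  have hbase : ∀ m, (1 : G) ∈ (W m : Set G) * U := by
    intro m
    obtain ⟨x, hx, u, hu, hxu0⟩ := hcov (Set.one_mem_pow hS1 (n := n))
    have hxu : x * u = 1 := hxu0
    have hxU : x ∈ U := by
      have : x = u⁻¹ := by rw [eq_inv_iff_mul_eq_one]; exact hxu
      rw [this]; exact hUinv u hu
    have hxW : x ∈ W m := by
      rw [hWmem]
      refine ⟨hx, ?_⟩
      have := Set.mul_mem_mul (Set.one_mem_pow hS1 (n := m)) hxU
      rwa [one_mul] at this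
    exact hxu ▸ Set.mul_mem_mul (Finset.mem_coe.2 hxW) hu
  -- the key growth step
  have step : ∀ m, m + 1 ≤ n → ¬ (S ^ n ⊆ (W m : Set G) * U) → W m ⊂ W (m + 1) := by
    intro m hmn hns
    have hex : ∃ j, ¬ (S ^ j ⊆ (W m : Set G) * U) := ⟨n, hns⟩
    set j := Nat.find hex with hj
    have hjP : ¬ (S ^ j ⊆ (W m : Set G) * U) := Nat.find_spec hex
    have hjn : j ≤ n := Nat.find_le hns
    have hj1 : 1 ≤ j := by
      rcases Nat.eq_zero_or_pos j with h | h
      · exfalso; apply hjP; rw [h, pow_zero]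
        intro z hz
        rw [Set.mem_one] at hz
        rw [hz]; exact hbase m
      · exact h
    have hprev : S ^ (j - 1) ⊆ (W m : Set G) * U := by
      by_contra h
      have h2 : j ≤ j - 1 := Nat.find_le h
      omega
    obtain ⟨s, hs, hsW⟩ := Set.not_subset.1 hjP
    have hsSn : s ∈ S ^ n := Set.pow_subset_pow_right hS1 hjn hs
    -- decompose s = t * s'
    have hsplit : S ^ j = S * S ^ (j - 1) := by
      conv_lhs => rw [show j = 1 + (j - 1) by omega]
      rw [pow_add, pow_one]
    rw [hsplit] at hs
    obtain ⟨t, ht, s', hs', hts0⟩ := hs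
    have hts : t * s' = s := hts0
    obtain ⟨y, hy, u₁, hu₁, hyu₁0⟩ := hprev hs'
    have hyu₁ : y * u₁ = s' := hyu₁0
    have hyW := (hWmem m y).1 (Finset.mem_coe.1 hy)
    obtain ⟨r, hr, v, hv, hrv0⟩ := hyW.2
    have hrv : r * v = y := hrv0
    -- s ∈ X * U
    obtain ⟨x, hx, u, hu, hxu0⟩ := hcov hsSn
    have hxu : x * u = s := hxu0
    have hxX : x ∈ X := Finset.mem_coe.1 hx
    -- q = t * r ∈ S^(m+1) ⊆ S^n ⊆ X * U
    have hq : t * r ∈ S ^ (m + 1) := by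
      rw [pow_succ']; exact Set.mul_mem_mul ht hr
    obtain ⟨x₁, hx₁, u', hu', hqx₁0⟩ := hcov (Set.pow_subset_pow_right hS1 hmn hq)
    have hqx₁ : x₁ * u' = t * r := hqx₁0
    have hx₁X : x₁ ∈ X := Finset.mem_coe.1 hx₁
    -- x = x₁ * (u' * v * u₁ * u⁻¹)
    have hxeq : x = x₁ * (u' * v * u₁ * u⁻¹) := by
      have h1 : x * u = t * r * v * u₁ := by
        rw [hxu, ← hts, ← hyu₁, ← hrv]; group
      have h2 : x * u = x₁ * u' * v * u₁ := by rw [h1, hqx₁]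
      have := congrArg (· * u⁻¹) h2
      simpa [mul_assoc] using this
    have hU4 : u' * v * u₁ * u⁻¹ ∈ U ^ 4 := by
      have h4 : U ^ 4 = U * U * U * U := by
        rw [show (4 : ℕ) = 2 + 1 + 1 by norm_num, pow_succ, pow_succ, sq]
      rw [h4]
      exact Set.mul_mem_mul (Set.mul_mem_mul (Set.mul_mem_mul hu' hv) hu₁) (hUinv u hu)
    have hxx₁ : x = x₁ := by
      by_contra hne
      exact hsep x hxX x₁ hx₁X hne (hxeq ▸ ⟨_, hU4, (smul_eq_mul (α := G) _ _).symm ▸ rfl⟩)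
    -- x ∈ W (m+1) \ W m
    have hxW1 : x ∈ W (m + 1) := by
      rw [hWmem]
      refine ⟨hxX, ?_⟩
      have : x = (t * r) * u'⁻¹ := by
        rw [hxx₁, ← hqx₁]; group
      rw [this]
      exact Set.mul_mem_mul hq (hUinv u' hu')
    have hxWm : x ∉ W m := by
      intro hmem
      apply hsW
      rw [← hxu]
      exact Set.mul_mem_mul (Finset.mem_coe.2 hmem) hu
    exact ⟨hWmono m, fun hsub => hxWm (hsub hxW1)⟩
  -- there is m ≤ min n (k-1) with S^n ⊆ W m * U
  have main : ∃ m, m ≤ n ∧ m ≤ k - 1 ∧ S ^ n ⊆ (W m : Set G) * U := by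
    by_cases hnk : n ≤ k - 1
    · exact ⟨n, le_rfl, hnk, htriv⟩
    · push_neg at hnk
      by_contra hcon
      push_neg at hcon
      have hnc : ∀ m, m ≤ n → m ≤ k - 1 → ¬ (S ^ n ⊆ (W m : Set G) * U) := by
        intro m h1 h2 h3
        exact absurd h3 (hcon m h1 h2)
      have hgrow : ∀ m, m ≤ k - 1 → m + 1 ≤ (W m).card := by
        intro m
        induction m with
        | zero =>
          intro _
          obtain ⟨z, hz, _, _, _⟩ := hbase 0
          exact Finset.card_pos.2 ⟨z, Finset.mem_coe.1 hz⟩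
        | succ p ih =>
          intro hp
          have hp' : p ≤ k - 1 := by omega
          have h1 : p + 1 ≤ n := by omega
          have hss := step p h1 (hnc p (by omega) hp')
          have := Finset.card_lt_card hss
          omega
      have hcard : k ≤ (W (k - 1)).card := by
        have := hgrow (k - 1) le_rfl
        omega
      have hWeq : W (k - 1) = X :=
        Finset.eq_of_subset_of_card_le (hWX _) (le_trans hXk hcard)
      exact hnc (k - 1) (by omega) le_rfl (by rw [hWeq]; exact hcov)
  obtain ⟨m, hmn, hmk, hmcov⟩ := main
  -- choose representatives in S^m
  have hchoice : ∀ x ∈ W m, ∃ r, r ∈ S ^ m ∧ x ∈ r • U := by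
    intro x hx
    obtain ⟨r, hr, v, hv, hrv⟩ := ((hWmem m x).1 hx).2
    exact ⟨r, hr, ⟨v, hv, hrv⟩⟩
  set f : {x : G // x ∈ W m} → G := fun x => (hchoice x.1 x.2).choose with hf
  have hfS : ∀ x, f x ∈ S ^ m := fun x => (hchoice x.1 x.2).choose_spec.1
  have hfU : ∀ x, (x : G) ∈ f x • U := fun x => (hchoice x.1 x.2).choose_spec.2
  refine ⟨(W m).attach.image f, ?_, ?_, ?_⟩
  · intro z hz
    rw [Finset.coe_image] at hz
    obtain ⟨x, _, rfl⟩ := hz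
    exact Set.pow_subset_pow_right hS1 hmk (hfS x)
  · calc ((W m).attach.image f).card ≤ (W m).attach.card := Finset.card_image_le
      _ = (W m).card := Finset.card_attach
      _ ≤ X.card := Finset.card_le_card (hWX m)
  · intro s hs
    obtain ⟨x, hx, u, hu, hxu0⟩ := hmcov hs
    have hxu : x * u = s := hxu0
    have hxW : x ∈ W m := Finset.mem_coe.1 hx
    obtain ⟨v, hv, hrv0⟩ := hfU ⟨x, hxW⟩
    have hrv : f ⟨x, hxW⟩ * v = x := hrv0
    have hfmem : f ⟨x, hxW⟩ ∈ (W m).attach.image f :=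
      Finset.mem_image.2 ⟨⟨x, hxW⟩, Finset.mem_attach _ _, rfl⟩
    have : s = f ⟨x, hxW⟩ * (v * u) := by
      rw [← mul_assoc, hrv, hxu]
    rw [this]
    exact Set.mul_mem_mul (Finset.mem_coe.2 hfmem) (by rw [sq]; exact Set.mul_mem_mul hv hu)
end

section
/- Let k, r ∈ ℕ. Suppose G is a group with symmetric generating set S containing the identity, and X ⊆ S^k and U ⊆ G satisfy S^(r+k) ⊆ X·U. Then S^(mr+k) ⊆ X·U^m for all m ∈ ℕ with m ≥ 1. -/
open Pointwise

theorem stmt_2 {G : Type*} [Group G] (k r : ℕ) (S : Set G)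
    (hSsym : S⁻¹ = S) (hS1 : (1 : G) ∈ S) (hgen : Subgroup.closure S = ⊤)
    (X U : Set G) (hX : X ⊆ S ^ k) (hcov : S ^ (r + k) ⊆ X * U) :
    ∀ m : ℕ, 1 ≤ m → S ^ (m * r + k) ⊆ X * U ^ m := by
  intro m hm
  induction m, hm using Nat.le_induction with
  | base => simpa using hcov
  | succ n hn ih =>
    have h1 : S ^ ((n + 1) * r + k) = S ^ r * S ^ (n * r + k) := by
      rw [← pow_add]; ring_nf
    rw [h1]
    calc S ^ r * S ^ (n * r + k) ⊆ S ^ r * (X * U ^ n) := Set.mul_subset_mul_left ih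
      _ = (S ^ r * X) * U ^ n := by rw [mul_assoc]
      _ ⊆ S ^ (r + k) * U ^ n := Set.mul_subset_mul_right (by
            calc S ^ r * X ⊆ S ^ r * S ^ k := Set.mul_subset_mul_left hX
              _ = S ^ (r + k) := (pow_add S r k).symm)
      _ ⊆ (X * U) * U ^ n := Set.mul_subset_mul_right hcov
      _ = X * U ^ (n + 1) := by rw [mul_assoc, ← pow_succ']
end

section
/- Let K ≥ 1 and suppose A is a finite symmetric subset of a group G containing the identity such that |A³| ≤ K|A|. Then A² is a K³-approximate group. -/
open Pointwise Finset

theorem stmt_5 {G : Type*} [Group G] [DecidableEq G] (K : ℝ) (hK : 1 ≤ K)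
    (A : Finset G) (hAsym : A⁻¹ = A) (hA1 : (1 : G) ∈ A)
    (htrip : ((A ^ 3).card : ℝ) ≤ K * A.card) :
    (A ^ 2)⁻¹ = A ^ 2 ∧ (1 : G) ∈ A ^ 2 ∧
      ∃ X : Finset G, (X.card : ℝ) ≤ K ^ 3 ∧ (A ^ 2) * (A ^ 2) ⊆ X * (A ^ 2) := by
  have hA2inv : (A ^ 2)⁻¹ = A ^ 2 := by rw [← inv_pow, hAsym]
  have hA2one : (1 : G) ∈ A ^ 2 := by
    rw [sq]
    simpa using Finset.mul_mem_mul hA1 hA1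
  have hApos : (0 : ℝ) < A.card := by
    exact_mod_cast Finset.card_pos.2 ⟨1, hA1⟩
  -- triangle inequality step: #(A^(n+3)) * #A ≤ #(A^(n+2)) * #(A^3)
  have step : ∀ n : ℕ, ((A ^ (n + 3)).card : ℝ) * A.card ≤ (A ^ (n + 2)).card * (A ^ 3).card := by
    intro n
    have h := Finset.ruzsa_triangle_inequality_mul_mul_invMul (A ^ (n + 1)) A (A ^ 2)
    have e1 : A ^ (n + 1) * A ^ 2 = A ^ (n + 3) := by rw [← pow_add]
    have e2 : A ^ (n + 1) * A = A ^ (n + 2) := by rw [← pow_succ]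
    have e3 : (A ^ 2)⁻¹ * A = A ^ 3 := by rw [hA2inv, ← pow_succ]
    rw [e1, e2, e3] at h
    exact_mod_cast h
  have h4 := step 1
  have h5 := step 2
  have c3pos : (0 : ℝ) ≤ ((A ^ 3).card : ℝ) := by positivity
  have c4pos : (0 : ℝ) ≤ ((A ^ 4).card : ℝ) := by positivity
  have h5' : ((A ^ 5).card : ℝ) ≤ K ^ 3 * A.card := by
    norm_num at h4 h5
    have h1 : ((A ^ 5).card : ℝ) * A.card * A.card ≤ (A ^ 4).card * (A ^ 3).card * A.card := by
      nlinarith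
    have h2 : ((A ^ 4).card : ℝ) * (A ^ 3).card * A.card ≤
        (A ^ 3).card * (A ^ 3).card * (A ^ 3).card := by nlinarith
    have h3 : ((A ^ 3).card : ℝ) * (A ^ 3).card * (A ^ 3).card ≤ (K * A.card) ^ 3 := by
      have := mul_le_mul (mul_le_mul htrip htrip c3pos (by positivity)) htrip c3pos
        (by positivity)
      calc ((A ^ 3).card : ℝ) * (A ^ 3).card * (A ^ 3).card ≤ K * A.card * (K * A.card) *
            (K * A.card) := this
        _ = (K * A.card) ^ 3 := by ring
    have : ((A ^ 5).card : ℝ) * A.card * A.card ≤ K ^ 3 * A.card * A.card * A.card := by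
      calc ((A ^ 5).card : ℝ) * A.card * A.card ≤ (K * A.card) ^ 3 := le_trans h1 (h2.trans h3)
        _ = K ^ 3 * A.card * A.card * A.card := by ring
    have hfin : ((A ^ 5).card : ℝ) * A.card * A.card ≤ (K ^ 3 * A.card) * (A.card * A.card) := by
      linarith [this]
    rw [mul_assoc] at hfin
    exact le_of_mul_le_mul_right hfin (by positivity)
  -- Ruzsa covering
  obtain ⟨F, hFsub, hFcard, hcov⟩ :=
    Finset.ruzsa_covering_mul (B := A) (A := A ^ 4) ⟨1, hA1⟩ (by
      rw [← pow_succ]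
      exact h5')
  refine ⟨hA2inv, hA2one, F, hFcard, ?_⟩
  have hdiv : A / A = A ^ 2 := by
    rw [div_eq_mul_inv, hAsym, sq]
  calc A ^ 2 * A ^ 2 = A ^ 4 := by rw [← pow_add]
    _ ⊆ F * (A / A) := hcov
    _ = F * A ^ 2 := by rw [hdiv]
end

section
/- Let G be a group, H a subgroup of G of index at most k (for some k ∈ ℕ, k ≥ 1), and S a symmetric generating set of G containing the identity. Then every left coset of H contains an element of S^(k-1); that is, S^(k-1) contains a complete set of left coset representatives for H. -/
open Pointwise

theorem stmt_8 {G : Type*} [Group G] (H : Subgroup G) (k : ℕ) (hk : 1 ≤ k)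
    (hfin : H.index ≠ 0) (hindex : H.index ≤ k)
    (S : Set G) (hSsym : S⁻¹ = S) (hS1 : (1 : G) ∈ S)
    (hgen : Subgroup.closure S = ⊤) :
    ∀ g : G, ∃ s ∈ S ^ (k - 1), g⁻¹ * s ∈ H := by
  classical
  have hQfin : Finite (G ⧸ H) := by
    rw [Subgroup.index] at hfin
    exact (Nat.card_ne_zero.mp hfin).2
  -- the "balls" in the quotient
  set T : ℕ → Set (G ⧸ H) := fun n => (QuotientGroup.mk : G → G ⧸ H) '' (S ^ n) with hT
  -- every g lies in some S^m
  have hmem : ∀ g : G, ∃ m, g ∈ S ^ m := by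
    intro g
    have hg : g ∈ Subgroup.closure S := by rw [hgen]; trivial
    induction hg using Subgroup.closure_induction with
    | mem x hx => exact ⟨1, by simpa using hx⟩
    | one => exact ⟨0, by simp⟩
    | mul x y hx hy ihx ihy =>
        obtain ⟨m, hm⟩ := ihx; obtain ⟨m', hm'⟩ := ihy
        exact ⟨m + m', by rw [pow_add]; exact Set.mul_mem_mul hm hm'⟩
    | inv x hx ihx =>
        obtain ⟨m, hm⟩ := ihx
        refine ⟨m, ?_⟩
        have : x⁻¹ ∈ (S ^ m)⁻¹ := by simpa using hm
        rwa [← inv_pow, hSsym] at this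
  -- monotone
  have hmono : ∀ n, T n ⊆ T (n + 1) := by
    intro n q hq
    obtain ⟨x, hx, rfl⟩ := hq
    exact ⟨x * 1, by rw [pow_succ]; exact Set.mul_mem_mul hx hS1, by simp⟩
  have hmono' : ∀ m n, m ≤ n → T m ⊆ T n := by
    intro m n h
    induction h with
    | refl => exact le_refl _
    | step h ih => intro q hq; exact hmono _ (ih hq)
  -- step description
  have hstep : ∀ n (q : G ⧸ H), q ∈ T (n + 1) ↔ ∃ s ∈ S, ∃ p ∈ T n, q = s • p := by
    intro n q
    constructor
    · rintro ⟨x, hx, rfl⟩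
      rw [pow_succ'] at hx
      obtain ⟨s, hs, y, hy, rfl⟩ := hx
      exact ⟨s, hs, QuotientGroup.mk y, ⟨y, hy, rfl⟩, rfl⟩
    · rintro ⟨s, hs, p, ⟨y, hy, rfl⟩, rfl⟩
      exact ⟨s * y, by rw [pow_succ']; exact Set.mul_mem_mul hs hy, rfl⟩
  -- stabilization
  have hstab : ∀ n, T (n + 1) ⊆ T n → ∀ m, T m ⊆ T n := by
    intro n hn m
    induction m with
    | zero => exact (hmono' 0 n (Nat.zero_le n))
    | succ m ih =>
        intro q hq
        rw [hstep] at hq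
        obtain ⟨s, hs, p, hp, rfl⟩ := hq
        exact hn ((hstep n _).2 ⟨s, hs, p, ih hp, rfl⟩)
  have hsurj : ∀ q : G ⧸ H, ∃ m, q ∈ T m := by
    intro q
    obtain ⟨g, rfl⟩ := QuotientGroup.mk_surjective q
    obtain ⟨m, hm⟩ := hmem g
    exact ⟨m, g, hm, rfl⟩
  have hstab' : ∀ n, T (n + 1) ⊆ T n → T n = Set.univ := by
    intro n hn
    apply Set.eq_univ_of_forall
    intro q
    obtain ⟨m, hm⟩ := hsurj q
    exact hstab n hn m hm
  -- cardinality growth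
  have hcard : ∀ n, T n = Set.univ ∨ n + 1 ≤ (T n).ncard := by
    intro n
    induction n with
    | zero =>
        right
        have : T 0 = {((1 : G) : G ⧸ H)} := by
          rw [hT]; simp
        rw [this, Set.ncard_singleton]
    | succ n ih =>
        rcases ih with h | h
        · left
          exact Set.eq_univ_of_univ_subset (h ▸ hmono n)
        · by_cases hc : T (n + 1) ⊆ T n
          · left
            exact Set.eq_univ_of_univ_subset ((hstab' n hc) ▸ hmono n)
          · right
            have hlt : T n ⊂ T (n + 1) := ⟨hmono n, hc⟩
            have : (T n).ncard < (T (n + 1)).ncard :=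
              Set.ncard_lt_ncard hlt (Set.toFinite _)
            omega
  -- conclude T (k-1) = univ
  have hTuniv : T (k - 1) = Set.univ := by
    rcases hcard (k - 1) with h | h
    · exact h
    · have h1 : (T (k - 1)).ncard ≤ (Set.univ : Set (G ⧸ H)).ncard :=
        Set.ncard_le_ncard (Set.subset_univ _) (Set.toFinite _)
      have h2 : (Set.univ : Set (G ⧸ H)).ncard = H.index := by
        rw [Set.ncard_univ, Subgroup.index]
      have : (Set.univ : Set (G ⧸ H)).ncard ≤ (T (k - 1)).ncard := by omega
      exact Set.eq_of_subset_of_ncard_le (Set.subset_univ _) this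
  intro g
  have : (g : G ⧸ H) ∈ T (k - 1) := hTuniv ▸ Set.mem_univ _
  obtain ⟨s, hs, hsg⟩ := this
  refine ⟨s, hs, ?_⟩
  have := QuotientGroup.eq.mp hsg.symm
  exact this
end

section
/- Let K ≥ 1 and let A be a finite nonempty symmetric subset of a group G satisfying |A²| ≤ K|A|. Define V = {x ∈ G : |A ∩ xA| > |A|/(2K)}. Then V is symmetric, V ⊆ A², and |V| ≥ |A|/(2K). -/
open Pointwise Finset

theorem stmt_14 {G : Type*} [Group G] [DecidableEq G] (K : ℝ) (hK : 1 ≤ K)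
    (A : Finset G) (hA : A.Nonempty) (hAsym : A⁻¹ = A)
    (hdoub : ((A ^ 2).card : ℝ) ≤ K * A.card)
    (V : Set G) (hV : V = {x : G | (A.card : ℝ) / (2 * K) < ((A ∩ x • A).card : ℝ)}) :
    V⁻¹ = V ∧ V ⊆ ((A ^ 2 : Finset G) : Set G) ∧ (A.card : ℝ) / (2 * K) ≤ V.ncard := by
  have hK0 : (0:ℝ) < K := lt_of_lt_of_le one_pos hK
  have hcard0 : (0:ℝ) < A.card := by exact_mod_cast Finset.card_pos.mpr hA
  have hnonneg : (0:ℝ) ≤ (A.card : ℝ) / (2 * K) := by positivity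
  -- translation invariance
  have hc : ∀ x : G, (A ∩ x⁻¹ • A).card = (A ∩ x • A).card := by
    intro x
    have h1 : x • (A ∩ x⁻¹ • A) = x • A ∩ A := by
      rw [Finset.smul_finset_inter, smul_inv_smul]
    calc (A ∩ x⁻¹ • A).card = (x • (A ∩ x⁻¹ • A)).card :=
          (Finset.card_smul_finset x _).symm
      _ = (x • A ∩ A).card := by rw [h1]
      _ = (A ∩ x • A).card := by rw [Finset.inter_comm]
  -- membership in A^2
  have hmem : ∀ x : G, x ∈ V → x ∈ A ^ 2 := by
    intro x hx
    rw [hV] at hx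
    have hpos : 0 < (A ∩ x • A).card := by
      have : (0:ℝ) < ((A ∩ x • A).card : ℝ) := lt_of_le_of_lt hnonneg hx
      exact_mod_cast this
    obtain ⟨a, ha⟩ := Finset.card_pos.mp hpos
    rw [Finset.mem_inter] at ha
    obtain ⟨haA, haxA⟩ := ha
    rw [Finset.mem_smul_finset] at haxA
    obtain ⟨b, hbA, hba⟩ := haxA
    have hbinv : b⁻¹ ∈ A := by
      rw [← hAsym]; exact Finset.inv_mem_inv hbA
    have hx2 : x = a * b⁻¹ := by
      simp only [smul_eq_mul] at hba
      rw [← hba]; group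
    rw [sq, hx2]
    exact Finset.mul_mem_mul haA hbinv
  -- the key counting identity
  have key : ∑ x ∈ A ^ 2, (A ∩ x • A).card = A.card * A.card := by
    have h1 : ∀ x : G, (A ∩ x • A).card = ∑ a ∈ A, if a ∈ x • A then 1 else 0 := by
      intro x
      rw [Finset.sum_boole, ← Finset.filter_mem_eq_inter]
      simp
    calc ∑ x ∈ A ^ 2, (A ∩ x • A).card
        = ∑ x ∈ A ^ 2, ∑ a ∈ A, if a ∈ x • A then 1 else 0 := by
          exact Finset.sum_congr rfl fun x _ => h1 x
      _ = ∑ a ∈ A, ∑ x ∈ A ^ 2, if a ∈ x • A then 1 else 0 := Finset.sum_comm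
      _ = ∑ a ∈ A, ((A ^ 2).filter (fun x => a ∈ x • A)).card := by
          refine Finset.sum_congr rfl fun a _ => ?_
          rw [Finset.sum_boole]; simp
      _ = ∑ a ∈ A, A.card := by
          refine Finset.sum_congr rfl fun a haA => ?_
          have hfeq : (A ^ 2).filter (fun x => a ∈ x • A) = a • A := by
            ext x
            simp only [Finset.mem_filter, Finset.mem_smul_finset, smul_eq_mul]
            constructor
            · rintro ⟨hx2, b, hbA, hba⟩
              refine ⟨b⁻¹, ?_, ?_⟩
              · rw [← hAsym]; exact Finset.inv_mem_inv hbA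
              · rw [← hba]; group
            · rintro ⟨b, hbA, hba⟩
              constructor
              · have hbinv : b ∈ A := hbA
                rw [sq, ← hba]
                exact Finset.mul_mem_mul haA hbA
              · exact ⟨b⁻¹, by rw [← hAsym]; exact Finset.inv_mem_inv hbA,
                  by rw [← hba]; group⟩
          rw [hfeq, Finset.card_smul_finset]
      _ = A.card * A.card := by rw [Finset.sum_const, smul_eq_mul]
  -- define the finset version of V
  set W : Finset G := (A ^ 2).filter
    (fun x => (A.card : ℝ) / (2 * K) < ((A ∩ x • A).card : ℝ)) with hW
  have hVW : V = (W : Set G) := by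
    ext x
    simp only [hW, Finset.coe_filter, Set.mem_setOf_eq]
    constructor
    · intro hx
      refine ⟨hmem x hx, ?_⟩
      rw [hV] at hx; exact hx
    · rintro ⟨-, h⟩
      rw [hV]; exact h
  -- the inequality
  have hsum : ((A.card : ℝ)) * A.card = ∑ x ∈ A ^ 2, ((A ∩ x • A).card : ℝ) := by
    rw [← Nat.cast_sum, key]; push_cast; ring
  have hsplit : ∑ x ∈ A ^ 2, ((A ∩ x • A).card : ℝ)
      = ∑ x ∈ W, ((A ∩ x • A).card : ℝ)
        + ∑ x ∈ (A ^ 2).filter (fun x => ¬ ((A.card : ℝ) / (2 * K) < ((A ∩ x • A).card : ℝ))),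
            ((A ∩ x • A).card : ℝ) := by
    rw [hW]
    exact (Finset.sum_filter_add_sum_filter_not _ _ _).symm
  have hWbound : ∑ x ∈ W, ((A ∩ x • A).card : ℝ) ≤ W.card * A.card := by
    rw [Finset.card_eq_sum_ones W]
    push_cast
    rw [Finset.sum_mul]
    refine Finset.sum_le_sum fun x _ => ?_
    have : (A ∩ x • A).card ≤ A.card := Finset.card_le_card (Finset.inter_subset_left)
    simpa using (Nat.cast_le.mpr this : ((A ∩ x • A).card : ℝ) ≤ A.card)
  have hrest : ∑ x ∈ (A ^ 2).filter (fun x => ¬ ((A.card : ℝ) / (2 * K) < ((A ∩ x • A).card : ℝ))),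
      ((A ∩ x • A).card : ℝ) ≤ ((A ^ 2).card : ℝ) * ((A.card : ℝ) / (2 * K)) := by
    calc ∑ x ∈ (A ^ 2).filter _, ((A ∩ x • A).card : ℝ)
        ≤ ∑ x ∈ (A ^ 2).filter (fun x => ¬ ((A.card : ℝ) / (2 * K) < ((A ∩ x • A).card : ℝ))),
            ((A.card : ℝ) / (2 * K)) := by
          refine Finset.sum_le_sum fun x hx => ?_
          rw [Finset.mem_filter] at hx
          exact le_of_not_gt hx.2
      _ = (((A ^ 2).filter _).card : ℝ) * ((A.card : ℝ) / (2 * K)) := by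
          rw [Finset.sum_const, nsmul_eq_mul]
      _ ≤ ((A ^ 2).card : ℝ) * ((A.card : ℝ) / (2 * K)) := by
          apply mul_le_mul_of_nonneg_right _ hnonneg
          exact_mod_cast Finset.card_le_card (Finset.filter_subset _ _)
  have hrest2 : ((A ^ 2).card : ℝ) * ((A.card : ℝ) / (2 * K)) ≤ (A.card : ℝ) * A.card / 2 := by
    have h := mul_le_mul_of_nonneg_right hdoub hnonneg
    calc ((A ^ 2).card : ℝ) * ((A.card : ℝ) / (2 * K)) ≤ K * A.card * ((A.card : ℝ) / (2 * K)) := h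
      _ = (A.card : ℝ) * A.card / 2 := by field_simp
  have hfinal : (A.card : ℝ) / 2 ≤ W.card := by
    have h1 : (A.card : ℝ) * A.card ≤ W.card * A.card + (A.card : ℝ) * A.card / 2 := by
      linarith [hsum, hsplit, hWbound, hrest, hrest2]
    have h2 : (A.card : ℝ) * A.card / 2 ≤ W.card * A.card := by linarith
    have h3 : (A.card : ℝ) / 2 * A.card ≤ (W.card : ℝ) * A.card := by
      calc (A.card : ℝ) / 2 * A.card = (A.card : ℝ) * A.card / 2 := by ring
        _ ≤ W.card * A.card := h2
    exact le_of_mul_le_mul_right h3 hcard0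
  refine ⟨?_, ?_, ?_⟩
  · ext x
    simp only [Set.mem_inv, hV, Set.mem_setOf_eq]
    rw [hc x]
  · intro x hx
    exact hmem x hx
  · rw [hVW, Set.ncard_coe_finset]
    calc (A.card : ℝ) / (2 * K) ≤ (A.card : ℝ) / 2 := by
          gcongr
          linarith
      _ ≤ W.card := hfinal
end

section
/- Let K ≥ 1 and let A be a finite nonempty symmetric subset of a group G containing the identity with |A²| ≤ K|A|. Define V = {x ∈ G : |A ∩ xA| > |A|/(2K)}. Then for every n ∈ ℕ with n ≥ 1, |A·V^n·A| ≤ 2^n·K^(2n+1)·|A|. -/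
open Pointwise

private lemma key_count {G : Type*} [Group G] [DecidableEq G] (K : ℝ) (hK : 1 ≤ K)
    (A : Finset G) (hA : A.Nonempty) (hAsym : A⁻¹ = A)
    (hdoub : ((A ^ 2).card : ℝ) ≤ K * A.card)
    (W : Finset G) (hW : ∀ v ∈ W, (A.card : ℝ) / (2 * K) < ((A ∩ v • A).card : ℝ))
    (X : Finset G) :
    ((X * W * A).card : ℝ) ≤ 2 * K ^ 2 * ((X * A).card : ℝ) := by
  classical
  set T : Finset G := X * W * A with hT
  set P : Finset (G × G) := (X * A) ×ˢ (A ^ 2) with hP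
  have hKpos : (0 : ℝ) < K := lt_of_lt_of_le one_pos hK
  have h2K : (0 : ℝ) < 2 * K := by linarith
  have hc : (0 : ℝ) < (A.card : ℝ) := by
    exact_mod_cast Finset.card_pos.mpr hA
  -- fiber lower bound
  have hfiber : ∀ s ∈ T, (A.card : ℝ) / (2 * K) ≤
      ((P.filter fun p => p.1 * p.2 = s).card : ℝ) := by
    intro s hs
    obtain ⟨u, hu, a, ha, hua⟩ := Finset.mem_mul.1 hs
    obtain ⟨t, ht, v, hv, htv⟩ := Finset.mem_mul.1 hu
    have hinj : (A ∩ v • A).card ≤ (P.filter fun p => p.1 * p.2 = s).card := by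
      apply Finset.card_le_card_of_injOn (fun b => (t * b, b⁻¹ * (v * a)))
      · intro b hb
        obtain ⟨hb1, hb2⟩ := Finset.mem_inter.1 hb
        obtain ⟨c, hc', hcb⟩ := Finset.mem_smul_finset.1 hb2
        simp only [smul_eq_mul] at hcb
        refine Finset.mem_filter.2 ⟨Finset.mem_product.2 ⟨?_, ?_⟩, ?_⟩
        · exact Finset.mul_mem_mul ht hb1
        · have : b⁻¹ * (v * a) = c⁻¹ * a := by
            rw [← hcb]; group
          dsimp only; rw [this, sq]
          have : c⁻¹ ∈ A := by rw [← hAsym]; exact Finset.inv_mem_inv hc'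
          exact Finset.mul_mem_mul this ha
        · simp only
          rw [show t * b * (b⁻¹ * (v * a)) = t * v * a by group, htv, hua]
      · intro b1 h1 b2 h2 he
        have : t * b1 = t * b2 := congrArg Prod.fst he
        exact mul_left_cancel this
    calc (A.card : ℝ) / (2 * K) ≤ ((A ∩ v • A).card : ℝ) := le_of_lt (hW v hv)
      _ ≤ _ := by exact_mod_cast hinj
  -- sum of fibers bounded by |P|
  have hsum : ∑ s ∈ T, (P.filter fun p => p.1 * p.2 = s).card ≤ P.card := by
    have heq : ∀ s ∈ T, (P.filter fun p => p.1 * p.2 = s) =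
        ((P.filter fun p => p.1 * p.2 ∈ T).filter fun p => p.1 * p.2 = s) := by
      intro s hs
      ext p
      simp only [Finset.mem_filter]
      constructor
      · rintro ⟨hp, he⟩; exact ⟨⟨hp, he ▸ hs⟩, he⟩
      · rintro ⟨⟨hp, _⟩, he⟩; exact ⟨hp, he⟩
    calc ∑ s ∈ T, (P.filter fun p => p.1 * p.2 = s).card
        = ∑ s ∈ T, ((P.filter fun p => p.1 * p.2 ∈ T).filter fun p => p.1 * p.2 = s).card :=
          Finset.sum_congr rfl (fun s hs => by rw [heq s hs])
      _ = (P.filter fun p => p.1 * p.2 ∈ T).card :=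
          (Finset.card_eq_sum_card_fiberwise (fun p hp => (Finset.mem_filter.1 hp).2)).symm
      _ ≤ P.card := Finset.card_filter_le _ _
  have hmain : ((A.card : ℝ) / (2 * K)) * T.card ≤ (P.card : ℝ) := by
    have h1 : ((A.card : ℝ) / (2 * K)) * T.card = ∑ _s ∈ T, (A.card : ℝ) / (2 * K) := by
      rw [Finset.sum_const, nsmul_eq_mul, mul_comm]
    rw [h1]
    calc ∑ s ∈ T, (A.card : ℝ) / (2 * K)
        ≤ ∑ s ∈ T, ((P.filter fun p => p.1 * p.2 = s).card : ℝ) :=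
          Finset.sum_le_sum hfiber
      _ ≤ (P.card : ℝ) := by exact_mod_cast hsum
  have hPcard : (P.card : ℝ) ≤ ((X * A).card : ℝ) * (K * A.card) := by
    rw [hP, Finset.card_product]
    push_cast
    exact mul_le_mul_of_nonneg_left hdoub (by positivity)
  have hfull : ((A.card : ℝ) / (2 * K)) * T.card ≤ ((X * A).card : ℝ) * (K * A.card) :=
    le_trans hmain hPcard
  rw [div_mul_eq_mul_div, div_le_iff₀ h2K] at hfull
  rw [← mul_le_mul_iff_right₀ hc]
  nlinarith [hfull]


theorem stmt_15 {G : Type*} [Group G] [DecidableEq G] (K : ℝ) (hK : 1 ≤ K)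
    (A : Finset G) (hA : A.Nonempty) (hAsym : A⁻¹ = A) (hA1 : (1 : G) ∈ A)
    (hdoub : ((A ^ 2).card : ℝ) ≤ K * A.card)
    (V : Set G) (hV : V = {x : G | (A.card : ℝ) / (2 * K) < ((A ∩ x • A).card : ℝ)}) :
    ∀ n : ℕ, 1 ≤ n →
      (((A : Set G) * V ^ n * (A : Set G)).ncard : ℝ) ≤ 2 ^ n * K ^ (2 * n + 1) * A.card := by
  classical
  have hKpos : (0 : ℝ) < K := lt_of_lt_of_le one_pos hK
  have hc : (0 : ℝ) < (A.card : ℝ) := by exact_mod_cast Finset.card_pos.mpr hA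
  set W : Finset G :=
    (A ^ 2).filter (fun x => (A.card : ℝ) / (2 * K) < ((A ∩ x • A).card : ℝ)) with hWdef
  have hVW : V = (W : Set G) := by
    rw [hV]
    ext x
    simp only [Set.mem_setOf_eq, Finset.coe_filter, hWdef, Finset.mem_coe,
      Finset.mem_filter]
    constructor
    · intro hx
      refine ⟨?_, hx⟩
      have hpos : (0 : ℝ) < (A.card : ℝ) / (2 * K) := by positivity
      have hne : (A ∩ x • A).Nonempty := by
        rw [← Finset.card_pos]
        by_contra h
        push_neg at h
        interval_cases h' : (A ∩ x • A).card
        · simp [h'] at hx; linarith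
      obtain ⟨a, ha⟩ := hne
      obtain ⟨ha1, ha2⟩ := Finset.mem_inter.1 ha
      obtain ⟨c, hcA, hca⟩ := Finset.mem_smul_finset.1 ha2
      simp only [smul_eq_mul] at hca
      have hx' : x = a * c⁻¹ := by rw [← hca]; group
      have hcinv : c⁻¹ ∈ A := by rw [← hAsym]; exact Finset.inv_mem_inv hcA
      rw [hx', sq]
      exact Finset.mul_mem_mul ha1 hcinv
    · exact fun h => h.2
  have hWmem : ∀ v ∈ W, (A.card : ℝ) / (2 * K) < ((A ∩ v • A).card : ℝ) :=
    fun v hv => (Finset.mem_filter.1 hv).2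
  have hfin : ∀ n : ℕ, 1 ≤ n →
      ((A * W ^ n * A).card : ℝ) ≤ 2 ^ n * K ^ (2 * n + 1) * A.card := by
    intro n hn
    induction n, hn using Nat.le_induction with
    | base =>
      rw [pow_one]
      calc ((A * W * A).card : ℝ)
          ≤ 2 * K ^ 2 * ((A * A).card : ℝ) :=
            key_count K hK A hA hAsym hdoub W hWmem A
        _ = 2 * K ^ 2 * ((A ^ 2).card : ℝ) := by rw [← sq]
        _ ≤ 2 * K ^ 2 * (K * A.card) :=
            mul_le_mul_of_nonneg_left hdoub (by positivity)
        _ = 2 ^ 1 * K ^ (2 * 1 + 1) * A.card := by ring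
    | succ n hn ih =>
      have hstep : ((A * W ^ (n + 1) * A).card : ℝ)
          ≤ 2 * K ^ 2 * ((A * W ^ n * A).card : ℝ) := by
        rw [pow_succ, ← mul_assoc]
        exact key_count K hK A hA hAsym hdoub W hWmem (A * W ^ n)
      calc ((A * W ^ (n + 1) * A).card : ℝ)
          ≤ 2 * K ^ 2 * ((A * W ^ n * A).card : ℝ) := hstep
        _ ≤ 2 * K ^ 2 * (2 ^ n * K ^ (2 * n + 1) * A.card) :=
            mul_le_mul_of_nonneg_left ih (by positivity)
        _ = 2 ^ (n + 1) * K ^ (2 * (n + 1) + 1) * A.card := by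
            have h : 2 * (n + 1) + 1 = (2 * n + 1) + 2 := by ring
            rw [h, pow_add, pow_succ]
            ring
  intro n hn
  rw [hVW, ← Finset.coe_pow, ← Finset.coe_mul, ← Finset.coe_mul, Set.ncard_coe_finset]
  exact hfin n hn
end
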